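/- Fix d ≥ 1 and reals p_1, …, p_d with 0 < p_i < 1/2 for all i. For α ∈ (0,1), let ρ(α) denote the unique positive solution of ∑_{i=1}^d p_i^{1+ρ}/(p_i(1-α)+α) = ∑_{i=1}^d p_i. Then ρ is strictly decreasing in α: if 0 < α_1 < α_2 < 1 then ρ(α_2) < ρ(α_1). (Higher correlation between the query and its planted neighbor yields a strictly smaller query-time exponent.) -/
import Mathlib


/-- The exponent `ρ(α)` of Theorem 1 is strictly decreasing in the
correlation `α`: if `0 < α₁ < α₂ < 1` and `ρ₁, ρ₂ > 0` solve the
respective exponent equations, then `ρ₂ < ρ₁`. -/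
theorem rho_strictly_decreasing_in_alpha
    (d : ℕ) (hd : 1 ≤ d) (p : Fin d → ℝ)
    (hp : ∀ i, 0 < p i ∧ p i < 1 / 2)
    (α₁ α₂ : ℝ) (hα₁ : 0 < α₁) (hα₁₂ : α₁ < α₂) (hα₂ : α₂ < 1)
    (ρ₁ ρ₂ : ℝ) (hρ₁ : 0 < ρ₁) (hρ₂ : 0 < ρ₂)
    (heq₁ : ∑ i, p i ^ (1 + ρ₁) / (p i * (1 - α₁) + α₁) = ∑ i, p i)
    (heq₂ : ∑ i, p i ^ (1 + ρ₂) / (p i * (1 - α₂) + α₂) = ∑ i, p i) :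
    ρ₂ < ρ₁ := by
  by_contra h
  push_neg at h
  have hne : (Finset.univ : Finset (Fin d)).Nonempty := by
    have : 0 < d := hd
    exact ⟨⟨0, this⟩, Finset.mem_univ _⟩
  have key : ∑ i, p i ^ (1 + ρ₂) / (p i * (1 - α₂) + α₂)
      < ∑ i, p i ^ (1 + ρ₁) / (p i * (1 - α₁) + α₁) := by
    refine Finset.sum_lt_sum_of_nonempty hne ?_
    intro i _
    obtain ⟨hpi, hpi2⟩ := hp i
    have hpi1 : p i < 1 := by linarith
    have hden1 : 0 < p i * (1 - α₁) + α₁ := by nlinarith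
    have hden : p i * (1 - α₁) + α₁ < p i * (1 - α₂) + α₂ := by nlinarith
    have hnum : p i ^ (1 + ρ₂) ≤ p i ^ (1 + ρ₁) :=
      Real.rpow_le_rpow_of_exponent_ge hpi (le_of_lt hpi1) (by linarith)
    have hnum1 : 0 < p i ^ (1 + ρ₁) := Real.rpow_pos_of_pos hpi _
    calc p i ^ (1 + ρ₂) / (p i * (1 - α₂) + α₂)
        ≤ p i ^ (1 + ρ₁) / (p i * (1 - α₂) + α₂) := by
          exact div_le_div_of_nonneg_right hnum (by nlinarith)
      _ < p i ^ (1 + ρ₁) / (p i * (1 - α₁) + α₁) :=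
          div_lt_div_of_pos_left hnum1 hden1 hden
  rw [heq₁, heq₂] at key
  exact lt_irrefl _ key
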